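/- arXiv:1701.06124 — 3 statements merged into one kernel-verified Lean document; each statement's English description precedes it below -/
import Mathlib

section
/- Let A be a commutative unital R-algebra, D = (D₁,…,Dₙ) R-derivations of A, and P(ξ) = a₀ + Σ_{k=1}^d P_k(ξ) a polynomial over A with P_k homogeneous of degree k and P_d ≠ 0. If u ∈ A satisfies P(D)(u^m) = 0 for all 1 ≤ m ≤ d, then a₀·u^d = (-1)^d·d!·P_d(D₁u,…,Dₙu). -/
/-- The differential operator `P(D)` obtained from `P ∈ A[ξ₁,…,ξₙ]` by substituting the
derivations `Dᵢ` for `ξᵢ`, with the coefficients written on the left. -/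
noncomputable def mvDiffOp {R A : Type*} [CommRing R] [CommRing A] [Algebra R A]
    {n : ℕ} (D : Fin n → Derivation R A A) (P : MvPolynomial (Fin n) A) :
    Module.End R A :=
  ∑ m ∈ P.support,
    LinearMap.mulLeft R (P.coeff m) *
      ((List.finRange n).map fun i => (D i).toLinearMap ^ m i).prod

namespace Stmt3Aux

variable {R A : Type*} [CommRing R] [CommRing A] [Algebra R A]

/-- The commutator with multiplication by `u`, as an operator on `Module.End R A`. -/
noncomputable def adU (u : A) : Module.End R (Module.End R A) :=
  LinearMap.mulRight R (LinearMap.mulLeft R u) - LinearMap.mulLeft R (LinearMap.mulLeft R u)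

lemma adU_apply (u : A) (L : Module.End R A) :
    adU (R := R) u L = L * LinearMap.mulLeft R u - LinearMap.mulLeft R u * L := by
  simp [adU]

lemma adU_mul (u : A) (L₁ L₂ : Module.End R A) :
    adU (R := R) u (L₁ * L₂) = adU (R := R) u L₁ * L₂ + L₁ * adU (R := R) u L₂ := by
  simp only [adU_apply, mul_sub, sub_mul, mul_assoc]; abel

lemma adU_mulLeft (u a : A) : adU (R := R) u (LinearMap.mulLeft R a) = 0 := by
  rw [adU_apply, Module.End.mul_eq_comp, Module.End.mul_eq_comp, ← LinearMap.mulLeft_mul,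
    ← LinearMap.mulLeft_mul, mul_comm, sub_self]

lemma adU_der (u : A) (Dr : Derivation R A A) :
    adU (R := R) u Dr.toLinearMap = LinearMap.mulLeft R (Dr u) := by
  ext x
  simp [adU_apply, Derivation.leibniz, smul_eq_mul]
  ring

lemma adU_one (u : A) : adU (R := R) u 1 = 0 := by
  simp [adU_apply]

lemma adU_pow_mulLeft_mul (u a : A) (T : Module.End R A) (N : ℕ) :
    (adU (R := R) u ^ N) (LinearMap.mulLeft R a * T) =
      LinearMap.mulLeft R a * (adU (R := R) u ^ N) T := by
  induction N with
  | zero => simp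
  | succ N ih =>
    rw [pow_succ', Module.End.mul_apply, ih, adU_mul, adU_mulLeft, zero_mul, zero_add,
      ← Module.End.mul_apply, ← pow_succ']

lemma adU_pow_der_mul (u : A) (Dr : Derivation R A A) (T : Module.End R A) (N : ℕ) :
    (adU (R := R) u ^ (N + 1)) (Dr.toLinearMap * T) =
      Dr.toLinearMap * (adU (R := R) u ^ (N + 1)) T +
        (N + 1) • (LinearMap.mulLeft R (Dr u) * (adU (R := R) u ^ N) T) := by
  induction N with
  | zero => simp [adU_mul, adU_der, add_comm]
  | succ N ih =>
    rw [pow_succ' _ (N + 1), Module.End.mul_apply, ih]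
    rw [map_add, map_nsmul, adU_mul, adU_mul, adU_der, adU_mulLeft, zero_mul, zero_add]
    rw [← Module.End.mul_apply, ← pow_succ', ← Module.End.mul_apply, ← pow_succ', succ_nsmul]
    module

/-- The product of the linear maps of a list of derivations. -/
noncomputable def prodD (l : List (Derivation R A A)) : Module.End R A :=
  (l.map Derivation.toLinearMap).prod

lemma adU_pow_prodD_of_lt (u : A) :
    ∀ (l : List (Derivation R A A)) (N : ℕ), l.length < N →
      (adU (R := R) u ^ N) (prodD l) = 0 := by
  intro l
  induction l with
  | nil =>
    intro N hN
    obtain ⟨M, rfl⟩ := Nat.exists_eq_succ_of_ne_zero (show N ≠ 0 by omega)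
    rw [pow_succ, Module.End.mul_apply,
      show prodD ([] : List (Derivation R A A)) = 1 by simp [prodD], adU_one, map_zero]
  | cons Dr t ih =>
    intro N hN
    have h1 : t.length + 1 < N := by simpa using hN
    obtain ⟨M, rfl⟩ := Nat.exists_eq_add_of_lt h1
    have hM : t.length < M + t.length + 1 := by omega
    have hM' : t.length < M + (t.length + 1) := by omega
    have : prodD (Dr :: t) = Dr.toLinearMap * prodD t := by simp [prodD]
    rw [this, show t.length + 1 + M = (M + t.length) + 1 by omega, adU_pow_der_mul,
      ih _ (by omega), ih _ (by omega), mul_zero, mul_zero, smul_zero, add_zero]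

lemma adU_pow_prodD (u : A) (l : List (Derivation R A A)) :
    (adU (R := R) u ^ l.length) (prodD l) =
      l.length.factorial • LinearMap.mulLeft R ((l.map fun Dr => Dr u).prod) := by
  induction l with
  | nil => simp [prodD, Nat.factorial, Module.End.one_eq_id, LinearMap.mulLeft_one]
  | cons Dr t ih =>
    have : prodD (Dr :: t) = Dr.toLinearMap * prodD t := by simp [prodD]
    rw [List.length_cons, this, adU_pow_der_mul, adU_pow_prodD_of_lt u t _ (by omega),
      mul_zero, zero_add, ih]
    rw [List.map_cons, List.prod_cons, Nat.factorial_succ]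
    rw [mul_smul_comm, smul_smul, LinearMap.mulLeft_mul, Module.End.mul_eq_comp]


lemma mulLeft_sum {γ : Type*} (s : Finset γ) (f : γ → A) :
    LinearMap.mulLeft R (∑ x ∈ s, f x) = ∑ x ∈ s, LinearMap.mulLeft R (f x) := by
  ext y
  simp [Finset.sum_mul]

lemma prodD_apply_one_of_ne : ∀ l : List (Derivation R A A), l ≠ [] →
    prodD (R := R) l 1 = 0 := by
  intro l
  induction l with
  | nil => intro hl; exact absurd rfl hl
  | cons Dr t ih =>
    intro _
    have hc : prodD (Dr :: t) = Dr.toLinearMap * prodD t := by simp [prodD]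
    rw [hc, Module.End.mul_apply]
    by_cases ht : t = []
    · subst ht
      show Dr ((prodD (R := R) []) 1) = 0
      simp [prodD]
    · rw [ih ht]
      show Dr (0 : A) = 0
      simp

section MList

variable {n : ℕ} (D : Fin n → Derivation R A A) (m : Fin n →₀ ℕ)

/-- The list of derivations corresponding to a monomial exponent. -/
noncomputable def mlist : List (Derivation R A A) :=
  (List.finRange n).flatMap fun i => List.replicate (m i) (D i)

lemma prodD_mlist :
    prodD (R := R) (mlist D m) =
      ((List.finRange n).map fun i => (D i).toLinearMap ^ m i).prod := by
  show (((List.finRange n).flatMap fun i =>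
      List.replicate (m i) (D i)).map Derivation.toLinearMap).prod = _
  induction List.finRange n with
  | nil => simp
  | cons i t ih =>
    simp only [List.flatMap_cons, List.map_append, List.prod_append, List.map_replicate,
      List.prod_replicate, List.map_cons, List.prod_cons, ih]

lemma length_mlist : (mlist D m).length = ∑ i, m i := by
  show ((List.finRange n).flatMap fun i => List.replicate (m i) (D i)).length = _
  rw [Fin.sum_univ_def]
  induction List.finRange n with
  | nil => simp
  | cons i t ih => simp [List.flatMap_cons, ih]

lemma map_mlist (u : A) :
    ((mlist D m).map fun Dr => Dr u).prod = ∏ i, D i u ^ m i := by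
  show (((List.finRange n).flatMap fun i =>
      List.replicate (m i) (D i)).map fun Dr => Dr u).prod = _
  rw [Fin.prod_univ_def]
  induction List.finRange n with
  | nil => simp
  | cons i t ih =>
    simp only [List.flatMap_cons, List.map_append, List.prod_append, List.map_replicate,
      List.prod_replicate, List.map_cons, List.prod_cons, ih]

end MList

lemma degree_eq_sum_univ {n : ℕ} (m : Fin n →₀ ℕ) : m.degree = ∑ i, m i :=
  Finset.sum_subset (Finset.subset_univ _)
    (fun i _ hi => Finsupp.notMem_support_iff.mp hi)

lemma adU_pow_mvDiffOp {n d : ℕ} (D : Fin n → Derivation R A A)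
    (P : MvPolynomial (Fin n) A) (hdeg : P.totalDegree ≤ d) (u : A) :
    (adU (R := R) u ^ d) (mvDiffOp D P) =
      d.factorial • LinearMap.mulLeft R
        (MvPolynomial.eval (fun i => D i u) (MvPolynomial.homogeneousComponent d P)) := by
  rw [mvDiffOp, map_sum]
  have step : ∀ m ∈ P.support,
      (adU (R := R) u ^ d) (LinearMap.mulLeft R (P.coeff m) *
          ((List.finRange n).map fun i => (D i).toLinearMap ^ m i).prod) =
        if m.degree = d then
          d.factorial • LinearMap.mulLeft R (P.coeff m * ∏ i, D i u ^ m i) else 0 := by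
    intro m hm
    rw [adU_pow_mulLeft_mul, ← prodD_mlist D m]
    have hlen : (mlist D m).length = m.degree := by
      rw [length_mlist, degree_eq_sum_univ]
    have hle : m.degree ≤ d := le_trans (MvPolynomial.le_totalDegree hm) hdeg
    by_cases hdm : m.degree = d
    · rw [if_pos hdm, ← hdm, ← hlen, adU_pow_prodD, map_mlist, hlen,
        mul_smul_comm, LinearMap.mulLeft_mul, Module.End.mul_eq_comp]
    · rw [if_neg hdm, adU_pow_prodD_of_lt u _ d (by omega), mul_zero]
  rw [Finset.sum_congr rfl step, Finset.sum_ite, Finset.sum_const_zero, add_zero,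
    MvPolynomial.homogeneousComponent_apply, map_sum, mulLeft_sum, Finset.smul_sum]
  refine Finset.sum_congr rfl fun m hm => ?_
  rw [MvPolynomial.eval_monomial, Finsupp.prod_pow]

lemma mvDiffOp_apply_one {n : ℕ} (D : Fin n → Derivation R A A)
    (P : MvPolynomial (Fin n) A) : mvDiffOp D P 1 = P.coeff 0 := by
  rw [mvDiffOp, LinearMap.sum_apply]
  have step : ∀ m ∈ P.support,
      (LinearMap.mulLeft R (P.coeff m) *
          ((List.finRange n).map fun i => (D i).toLinearMap ^ m i).prod) 1 =
        if m = 0 then P.coeff m else 0 := by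
    intro m hm
    rw [Module.End.mul_apply, ← prodD_mlist D m]
    have hnil : mlist D m = [] ↔ m = 0 := by
      rw [← List.length_eq_zero_iff, length_mlist]
      constructor
      · intro hz
        ext i
        have := Finset.sum_eq_zero_iff.mp hz i (Finset.mem_univ i)
        simpa using this
      · intro hz; simp [hz]
    by_cases hm0 : m = 0
    · rw [if_pos hm0, hnil.mpr hm0]
      show MvPolynomial.coeff m P * (prodD (R := R) []) 1 = MvPolynomial.coeff m P
      simp [prodD]
    · rw [if_neg hm0, prodD_apply_one_of_ne _ fun hh => hm0 (hnil.mp hh), map_zero]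
  rw [Finset.sum_congr rfl step, Finset.sum_ite_eq' P.support 0 (fun m => P.coeff m)]
  by_cases h0 : (0 : Fin n →₀ ℕ) ∈ P.support
  · rw [if_pos h0]
  · rw [if_neg h0, (MvPolynomial.notMem_support_iff.mp h0)]

lemma adU_pow_apply_one (u : A) (N : ℕ) (L : Module.End R A) :
    ((adU (R := R) u ^ N) L) 1 =
      ∑ m ∈ Finset.range (N + 1),
        ((-1 : ℤ) ^ (N - m) * N.choose m) • (u ^ (N - m) * L (u ^ m)) := by
  have hc : Commute (S := Module.End R (Module.End R A)) (LinearMap.mulRight R (LinearMap.mulLeft R u))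
      (-(LinearMap.mulLeft R (LinearMap.mulLeft R u))) := by
    rw [Commute, SemiconjBy]; ext L x; simp
  have h1 : adU (R := R) u ^ N =
      ∑ m ∈ Finset.range (N + 1),
        (LinearMap.mulRight R (LinearMap.mulLeft R u)) ^ m *
          (-(LinearMap.mulLeft R (LinearMap.mulLeft R u))) ^ (N - m) *
          (N.choose m : Module.End R (Module.End R A)) := by
    rw [show adU (R := R) u = LinearMap.mulRight R (LinearMap.mulLeft R u) +
      -(LinearMap.mulLeft R (LinearMap.mulLeft R u)) from sub_eq_add_neg (G := Module.End R (Module.End R A)) _ _, hc.add_pow]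
  rw [h1, LinearMap.sum_apply, LinearMap.sum_apply]
  refine Finset.sum_congr rfl fun m _ => ?_
  have hneg : (-(LinearMap.mulLeft R (LinearMap.mulLeft R u))) ^ (N - m) =
      ((-1 : ℤ) ^ (N - m)) • (LinearMap.mulLeft R (LinearMap.mulLeft R u)) ^ (N - m) := by
    rw [← neg_one_zsmul (LinearMap.mulLeft R (LinearMap.mulLeft R u)), smul_pow]
  rw [hneg]
  simp only [Module.End.mul_apply, LinearMap.smul_apply, Module.End.natCast_apply,
    LinearMap.pow_mulLeft, LinearMap.pow_mulRight, LinearMap.mulLeft_apply,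
    LinearMap.mulRight_apply, LinearMap.map_smul_of_tower, map_nsmul, mul_one]
  rw [mul_smul, natCast_zsmul]
  exact smul_comm _ _ _

end Stmt3Aux

/-- Let `A` be a commutative unital `R`-algebra, `D = (D₁,…,Dₙ)` `R`-derivations of `A`,
and `P(ξ) = a₀ + ∑_{k=1}^d P_k(ξ)` over `A` with `P_k` homogeneous of degree `k` and
`P_d ≠ 0` (`d ≥ 1`). If `P(D)(u^m) = 0` for all `1 ≤ m ≤ d`, then
`a₀ u^d = (-1)^d d! P_d(D₁u,…,Dₙu)`. -/
theorem stmt3 {R A : Type*} [CommRing R] [CommRing A] [Algebra R A]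
    (n d : ℕ) (hd : 1 ≤ d) (D : Fin n → Derivation R A A)
    (P : MvPolynomial (Fin n) A)
    (hdeg : P.totalDegree ≤ d)
    (hPd : MvPolynomial.homogeneousComponent d P ≠ 0)
    (u : A)
    (h : ∀ m : ℕ, 1 ≤ m → m ≤ d → mvDiffOp D P (u ^ m) = 0) :
    P.coeff 0 * u ^ d =
      (-1 : A) ^ d * (Nat.factorial d : A) *
        MvPolynomial.eval (fun i => D i u) (MvPolynomial.homogeneousComponent d P) := by
  classical
  have key := Stmt3Aux.adU_pow_apply_one (R := R) u d (mvDiffOp D P)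
  rw [Stmt3Aux.adU_pow_mvDiffOp D P hdeg u] at key
  set E := MvPolynomial.eval (fun i => D i u) (MvPolynomial.homogeneousComponent d P) with hE
  have hsum : ∑ m ∈ Finset.range (d + 1),
      ((-1 : ℤ) ^ (d - m) * d.choose m) • (u ^ (d - m) * mvDiffOp D P (u ^ m)) =
      ((-1 : ℤ) ^ d) • (u ^ d * P.coeff 0) := by
    rw [Finset.sum_eq_single 0]
    · rw [pow_zero, Stmt3Aux.mvDiffOp_apply_one, Nat.sub_zero, Nat.choose_zero_right,
        Nat.cast_one, mul_one]
    · intro m hm hm0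
      rw [h m (Nat.one_le_iff_ne_zero.mpr hm0)
        (by simpa [Nat.lt_succ_iff] using Finset.mem_range.mp hm), mul_zero, smul_zero]
    · intro habs
      exact absurd (Finset.mem_range.mpr (Nat.succ_pos d)) habs
  rw [hsum] at key
  have hL : ((d.factorial • LinearMap.mulLeft R E) 1) = (d.factorial : A) * E := by
    simp [nsmul_eq_mul]
  rw [hL] at key
  have hz : ((-1 : ℤ) ^ d) • (u ^ d * P.coeff 0) = (-1 : A) ^ d * (u ^ d * P.coeff 0) := by
    rw [zsmul_eq_mul]
    push_cast
    ring
  rw [hz] at key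
  have hne : (-1 : A) ^ d * (-1 : A) ^ d = 1 := by
    rw [← pow_add]
    exact Even.neg_one_pow ⟨d, by ring⟩
  calc P.coeff 0 * u ^ d = ((-1 : A) ^ d * (-1 : A) ^ d) * (u ^ d * P.coeff 0) := by
        rw [hne]; ring
    _ = (-1 : A) ^ d * ((d.factorial : A) * E) := by rw [mul_assoc, ← key]
    _ = (-1 : A) ^ d * (d.factorial : A) * E := by ring
end

section
/- Let A be a commutative unital R-algebra, D = (D₁,…,Dₙ) R-derivations of A, and P(ξ) = a₀ + Σ_{k=1}^d P_k(ξ) a polynomial over A of degree d ≥ 1. If u ∈ A satisfies P(D)(u^m) = 0 for all 1 ≤ m ≤ d+1, then a₀·u^{d+1} = 0. -/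
open Finset

section Aux
variable {R A : Type*} [CommRing R] [CommRing A] [Algebra R A]

/-- Representation of `L (u^m)` as `∑_{j ≤ k} m(m-1)⋯(m-j+1) • (g j * u^(m-j))`. -/
def MvDiffRep (u : A) (L : Module.End R A) (k : ℕ) (g : ℕ → A) : Prop :=
  ∀ m : ℕ, L (u ^ m) =
    ∑ j ∈ Finset.range (k + 1), m.descFactorial j • (g j * u ^ (m - j))

lemma mvDiffRep_one (u : A) : MvDiffRep u (1 : Module.End R A) 0 (fun _ => 1) := by
  intro m; simp

lemma mvDiffRep_mono {u : A} {L : Module.End R A} {k g} (h : MvDiffRep u L k g) {k' : ℕ}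
    (hk : k ≤ k') :
    MvDiffRep u L k' (fun j => if j < k + 1 then g j else 0) := by
  intro m
  rw [h m]
  have hs := Finset.sum_subset (s₁ := range (k + 1)) (s₂ := range (k' + 1))
      (f := fun j => m.descFactorial j • ((if j < k + 1 then g j else 0) * u ^ (m - j)))
      (Finset.range_subset_range.2 (Nat.succ_le_succ hk))
      (fun j _ hj => by
        rw [mem_range, not_lt] at hj
        show m.descFactorial j • ((if j < k + 1 then g j else 0) * u ^ (m - j)) = 0
        rw [if_neg (by omega), zero_mul, smul_zero])
  rw [← hs]
  exact Finset.sum_congr rfl fun j hj => by rw [mem_range] at hj; simp [hj]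

lemma mvDiffRep_deriv (Der : Derivation R A A) {u : A} {L : Module.End R A} {k g}
    (h : MvDiffRep u L k g) :
    MvDiffRep u (Der.toLinearMap * L) (k + 1)
      (fun j => (if j < k + 1 then Der (g j) else 0) +
        (if j = 0 then 0 else g (j - 1) * Der u)) := by
  intro m
  have hLm : (Der.toLinearMap * L) (u ^ m) = Der (L (u ^ m)) := rfl
  rw [hLm, h m, map_sum]
  have hterm : ∀ j, Der (m.descFactorial j • (g j * u ^ (m - j))) =
      m.descFactorial j • (Der (g j) * u ^ (m - j)) +
      m.descFactorial (j + 1) • (g j * Der u * u ^ (m - (j + 1))) := by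
    intro j
    rw [map_nsmul, Derivation.leibniz, Derivation.leibniz_pow]
    rw [Nat.descFactorial_succ, ← Nat.sub_sub]
    simp only [smul_eq_mul, nsmul_eq_mul, smul_smul, mul_smul]
    ring
  rw [Finset.sum_congr rfl fun j _ => hterm j, Finset.sum_add_distrib]
  have hsplit : ∀ j : ℕ, m.descFactorial j •
        (((if j < k + 1 then Der (g j) else 0) + if j = 0 then 0 else g (j - 1) * Der u)
          * u ^ (m - j)) =
      m.descFactorial j • ((if j < k + 1 then Der (g j) else 0) * u ^ (m - j)) +
      m.descFactorial j • ((if j = 0 then 0 else g (j - 1) * Der u) * u ^ (m - j)) :=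
    fun j => by rw [add_mul, smul_add]
  rw [Finset.sum_congr rfl fun j _ => hsplit j, Finset.sum_add_distrib]
  congr 1
  · have hs := Finset.sum_subset (s₁ := range (k + 1)) (s₂ := range (k + 1 + 1))
        (f := fun j => m.descFactorial j • ((if j < k + 1 then Der (g j) else 0) * u ^ (m - j)))
        (Finset.range_subset_range.2 (by omega))
        (fun j _ hj => by
          rw [mem_range, not_lt] at hj
          show m.descFactorial j • ((if j < k + 1 then Der (g j) else 0) * u ^ (m - j)) = 0
          rw [if_neg (by omega), zero_mul, smul_zero])
    rw [← hs]
    exact Finset.sum_congr rfl fun j hj => by rw [mem_range] at hj; simp [hj]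
  · rw [Finset.sum_range_succ'
      (f := fun j => m.descFactorial j • ((if j = 0 then 0 else g (j - 1) * Der u) * u ^ (m - j)))]
    simp

lemma mvDiffRep_pow (Der : Derivation R A A) {u : A} {L : Module.End R A} {k g}
    (h : MvDiffRep u L k g) (e : ℕ) :
    ∃ g', MvDiffRep u (Der.toLinearMap ^ e * L) (e + k) g' := by
  induction e with
  | zero => exact ⟨g, by simpa using h⟩
  | succ e ih =>
    obtain ⟨g', hg'⟩ := ih
    have h2 := mvDiffRep_deriv Der hg'
    have heq : Der.toLinearMap * (Der.toLinearMap ^ e * L) = Der.toLinearMap ^ (e + 1) * L := by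
      rw [pow_succ', mul_assoc]
    rw [heq] at h2
    have hk2 : e + k + 1 = e + 1 + k := by omega
    rw [hk2] at h2
    exact ⟨_, h2⟩

lemma mvDiffRep_list {n : ℕ} (D : Fin n → Derivation R A A) (α : Fin n → ℕ) (u : A)
    (l : List (Fin n)) :
    ∃ g, MvDiffRep u ((l.map fun i => (D i).toLinearMap ^ α i).prod) ((l.map α).sum) g := by
  induction l with
  | nil => exact ⟨_, by simpa using mvDiffRep_one u⟩
  | cons i l ih =>
    obtain ⟨g, hg⟩ := ih
    obtain ⟨g', hg'⟩ := mvDiffRep_pow (D i) hg (α i)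
    exact ⟨g', by simpa using hg'⟩

lemma prodMap_one_eq_zero {n : ℕ} (D : Fin n → Derivation R A A) (α : Fin n → ℕ)
    (l : List (Fin n)) (hl : ∃ i ∈ l, α i ≠ 0) :
    ((l.map fun i => (D i).toLinearMap ^ α i).prod) 1 = 0 := by
  induction l with
  | nil => simp at hl
  | cons i l ih =>
    rw [List.map_cons, List.prod_cons, Module.End.mul_apply]
    by_cases hc : ∃ j ∈ l, α j ≠ 0
    · rw [ih hc, map_zero]
    · push_neg at hc
      have hprod : ((l.map fun i => (D i).toLinearMap ^ α i).prod) = 1 := by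
        apply List.prod_eq_one
        intro x hx
        obtain ⟨j, hj, rfl⟩ := List.mem_map.1 hx
        rw [hc j hj, pow_zero]
      rw [hprod, Module.End.one_apply]
      have hi : α i ≠ 0 := by
        obtain ⟨j, hj, hja⟩ := hl
        rcases List.mem_cons.1 hj with rfl | hj'
        · exact hja
        · exact absurd (hc j hj') hja
      obtain ⟨e, he⟩ := Nat.exists_eq_succ_of_ne_zero hi
      rw [he, pow_succ, Module.End.mul_apply]
      have : (D i).toLinearMap 1 = 0 := (D i).map_one_eq_zero
      rw [this, map_zero]

lemma alt_sum_descFactorial {N j : ℕ} (hj : j < N) :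
    ∑ m ∈ range (N + 1), ((-1) ^ m * N.choose m * m.descFactorial j : ℤ) = 0 := by
  have hsub : Ico j (N + 1) ⊆ range (N + 1) := by
    rw [range_eq_Ico]; exact Finset.Ico_subset_Ico (Nat.zero_le j) le_rfl
  rw [← Finset.sum_subset hsub (fun m hm hm2 => by
    rw [mem_range] at hm
    rw [mem_Ico, not_and_or, not_le] at hm2
    have hmj : m < j := by omega
    simp [Nat.descFactorial_eq_zero_iff_lt.2 hmj])]
  rw [Finset.sum_Ico_eq_sum_range]
  have hNj : N + 1 - j = (N - j) + 1 := by omega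
  have hterm : ∀ t ∈ range (N + 1 - j),
      ((-1) ^ (j + t) * N.choose (j + t) * (j + t).descFactorial j : ℤ) =
      ((-1) ^ j * (N.choose j) * (j.factorial)) * ((-1) ^ t * (N - j).choose t) := by
    intro t ht
    rw [mem_range] at ht
    have h1 : (j + t).descFactorial j = j.factorial * (j + t).choose j :=
      Nat.descFactorial_eq_factorial_mul_choose _ _
    have h2 : N.choose (j + t) * (j + t).choose j = N.choose j * (N - j).choose t := by
      have := Nat.choose_mul (n := N) (k := j + t) (s := j) (by omega)
      simpa using this
    have h2' := congrArg (Nat.cast : ℕ → ℤ) h2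
    push_cast at h2'
    push_cast [h1]
    rw [pow_add]
    linear_combination ((-1 : ℤ) ^ j * (-1) ^ t * j.factorial) * h2'
  rw [Finset.sum_congr rfl hterm, ← Finset.mul_sum, hNj,
    Int.alternating_sum_range_choose_of_ne (by omega), mul_zero]

lemma sum_descFactorial_zero {d : ℕ} (c : ℕ → A) :
    ∑ j ∈ range (d + 1), (Nat.descFactorial 0 j) • c j = c 0 := by
  rw [Finset.sum_eq_single 0]
  · simp
  · intro j _ hj
    obtain ⟨j', rfl⟩ := Nat.exists_eq_succ_of_ne_zero hj
    rw [Nat.zero_descFactorial_succ, zero_smul]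
  · intro hn; exact absurd (mem_range.2 (by omega)) hn

end Aux

/-- Let `A` be a commutative unital `R`-algebra, `D = (D₁,…,Dₙ)` `R`-derivations of `A`,
and `P(ξ)` a polynomial over `A` of degree `d ≥ 1`. If `P(D)(u^m) = 0` for all
`1 ≤ m ≤ d+1`, then `a₀ u^{d+1} = 0`, where `a₀` is the constant term of `P`. -/
theorem stmt4 {R A : Type*} [CommRing R] [CommRing A] [Algebra R A]
    (n d : ℕ) (hd : 1 ≤ d) (D : Fin n → Derivation R A A)
    (P : MvPolynomial (Fin n) A) (hdeg : P.totalDegree = d)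
    (u : A)
    (h : ∀ m : ℕ, 1 ≤ m → m ≤ d + 1 → mvDiffOp D P (u ^ m) = 0) :
    P.coeff 0 * u ^ (d + 1) = 0 := by
  classical
  -- step 1: choose a representation for each monomial operator
  have hrep : ∀ α : Fin n →₀ ℕ, ∃ g : ℕ → A, α ∈ P.support →
      ∀ m : ℕ, (((List.finRange n).map fun i => (D i).toLinearMap ^ α i).prod) (u ^ m) =
        ∑ j ∈ range (d + 1), m.descFactorial j • (g j * u ^ (m - j)) := by
    intro α
    by_cases hα : α ∈ P.support
    · obtain ⟨g, hg⟩ := mvDiffRep_list D (fun i => α i) u (List.finRange n)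
      have hle : ((List.finRange n).map fun i => α i).sum ≤ d := by
        have h1 : ((List.finRange n).map fun i => α i).sum = ∑ i, α i :=
          (Fin.sum_univ_def _).symm
        have h2 : (∑ i, α i) = α.sum fun _ e => e :=
          (Finsupp.sum_fintype α (fun _ e => e) (fun _ => rfl)).symm
        rw [h1, h2, ← hdeg]
        exact MvPolynomial.le_totalDegree hα
      exact ⟨_, fun _ => mvDiffRep_mono hg hle⟩
    · exact ⟨fun _ => 0, fun hmem => absurd hmem hα⟩
  choose g hg using hrep
  set G : ℕ → A := fun j => ∑ α ∈ P.support, P.coeff α * g α j with hGdef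
  -- step 2: representation of the full operator
  have key1 : ∀ m : ℕ, mvDiffOp D P (u ^ m) =
      ∑ j ∈ range (d + 1), m.descFactorial j • (G j * u ^ (m - j)) := by
    intro m
    rw [mvDiffOp, LinearMap.sum_apply]
    simp only [Module.End.mul_apply, LinearMap.mulLeft_apply]
    rw [Finset.sum_congr rfl (fun α hα => by rw [hg α hα m])]
    simp_rw [Finset.mul_sum, mul_smul_comm]
    rw [Finset.sum_comm]
    refine Finset.sum_congr rfl fun j _ => ?_
    rw [← Finset.smul_sum]
    congr 1
    show _ = (∑ α ∈ P.support, MvPolynomial.coeff α P * g α j) * u ^ (m - j)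
    rw [Finset.sum_mul]
    exact Finset.sum_congr rfl fun α _ => by ring
  -- step 3: G 0 = P.coeff 0
  have hgval : ∀ α ∈ P.support, g α 0 =
      (((List.finRange n).map fun i => (D i).toLinearMap ^ α i).prod) 1 := by
    intro α hα
    have h1 := hg α hα 0
    rw [pow_zero] at h1
    rw [h1, sum_descFactorial_zero (d := d) (fun j => g α j * u ^ (0 - j))]
    simp
  have hG0 : G 0 = P.coeff 0 := by
    by_cases h0 : (0 : Fin n →₀ ℕ) ∈ P.support
    · show (∑ α ∈ P.support, MvPolynomial.coeff α P * g α 0) = MvPolynomial.coeff 0 P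
      rw [Finset.sum_eq_single_of_mem 0 h0]
      · have : g 0 0 = 1 := by
          rw [hgval 0 h0]
          have hprod : (((List.finRange n).map
              fun i => (D i).toLinearMap ^ (0 : Fin n →₀ ℕ) i).prod) = 1 := by
            apply List.prod_eq_one
            intro x hx
            obtain ⟨j, _, rfl⟩ := List.mem_map.1 hx
            simp
          rw [hprod, Module.End.one_apply]
        rw [this, mul_one]
      · intro α hα hα0
        have : g α 0 = 0 := by
          rw [hgval α hα]
          apply prodMap_one_eq_zero
          obtain ⟨i, hi⟩ := Finsupp.ne_iff.1 hα0
          exact ⟨i, List.mem_finRange i, by simpa using hi⟩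
        rw [this, mul_zero]
    · rw [MvPolynomial.notMem_support_iff.1 h0]
      show (∑ α ∈ P.support, MvPolynomial.coeff α P * g α 0) = 0
      apply Finset.sum_eq_zero
      intro α hα
      have hα0 : α ≠ 0 := fun hc => h0 (hc ▸ hα)
      have : g α 0 = 0 := by
        rw [hgval α hα]
        apply prodMap_one_eq_zero
        obtain ⟨i, hi⟩ := Finsupp.ne_iff.1 hα0
        exact ⟨i, List.mem_finRange i, by simpa using hi⟩
      rw [this, mul_zero]
  -- step 4: the key vanishing at m = 1, ..., d+1
  have key2 : ∀ m : ℕ, 1 ≤ m → m ≤ d + 1 →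
      ∑ j ∈ range (d + 1), m.descFactorial j • (G j * u ^ (d + 1 - j)) = 0 := by
    intro m hm1 hm2
    have heq : ∑ j ∈ range (d + 1), m.descFactorial j • (G j * u ^ (d + 1 - j)) =
        u ^ (d + 1 - m) * ∑ j ∈ range (d + 1), m.descFactorial j • (G j * u ^ (m - j)) := by
      rw [Finset.mul_sum]
      refine Finset.sum_congr rfl fun j _ => ?_
      rcases le_or_gt j m with hjm | hjm
      · rw [mul_smul_comm]
        congr 1
        rw [show d + 1 - j = (m - j) + (d + 1 - m) by omega, pow_add]
        ring
      · rw [Nat.descFactorial_eq_zero_iff_lt.2 hjm, zero_smul, zero_smul, mul_zero]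
    rw [heq, ← key1 m, h m hm1 hm2, mul_zero]
  -- step 5: alternating sum extraction
  have T1 : ∑ m ∈ range (d + 2), ((-1) ^ m * ((d + 1).choose m) : ℤ) •
      (∑ j ∈ range (d + 1), m.descFactorial j • (G j * u ^ (d + 1 - j))) =
      G 0 * u ^ (d + 1) := by
    rw [Finset.sum_eq_single 0]
    · rw [sum_descFactorial_zero (A := A) (fun j => G j * u ^ (d + 1 - j))]
      simp
    · intro m hm hm0
      rw [mem_range] at hm
      rw [key2 m (by omega) (by omega), smul_zero]
    · intro hn; exact absurd (mem_range.2 (by omega)) hn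
  have T2 : ∑ m ∈ range (d + 2), ((-1) ^ m * ((d + 1).choose m) : ℤ) •
      (∑ j ∈ range (d + 1), m.descFactorial j • (G j * u ^ (d + 1 - j))) = 0 := by
    have hswap : ∀ m ∈ range (d + 2), ((-1) ^ m * ((d + 1).choose m) : ℤ) •
        (∑ j ∈ range (d + 1), m.descFactorial j • (G j * u ^ (d + 1 - j))) =
        ∑ j ∈ range (d + 1),
          ((-1) ^ m * ((d + 1).choose m) * m.descFactorial j : ℤ) • (G j * u ^ (d + 1 - j)) := by
      intro m _
      rw [Finset.smul_sum]
      refine Finset.sum_congr rfl fun j _ => ?_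
      rw [← natCast_zsmul (G j * u ^ (d + 1 - j)) (m.descFactorial j), smul_smul]
    rw [Finset.sum_congr rfl hswap, Finset.sum_comm]
    refine Finset.sum_eq_zero fun j hj => ?_
    rw [← Finset.sum_smul, alt_sum_descFactorial (N := d + 1) (mem_range.1 hj), zero_smul]
  rw [← hG0, ← T1, T2]
end

section
/- Let A be a commutative unital R-algebra, D = (D₁,…,Dₙ) R-derivations of A, and P(ξ) a polynomial over A whose constant term a₀ = P(0) is neither zero nor a zero-divisor of A. Then the radical of Ker P(D), i.e. the set of u ∈ A with u^m ∈ Ker P(D) for all sufficiently large m, equals the nilradical of A. -/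
open Finset

lemma pascal_aux {M : Type*} [AddCommGroup M] :
    ∀ (d N : ℕ) (c : ℕ → M),
      (∀ m, N ≤ m → m ≤ N + d → ∑ j ∈ Finset.range (d + 1), (m.choose j) • c j = 0) →
      ∀ j ≤ d, c j = 0 := by
  intro d
  induction d with
  | zero =>
    intro N c h j hj
    interval_cases j
    have := h N le_rfl (by omega)
    simpa using this
  | succ d ih =>
    intro N c h
    have key : ∀ m : ℕ, ∑ j ∈ range (d + 2), ((m+1).choose j) • c j
        = (∑ j ∈ range (d + 2), (m.choose j) • c j)
          + ∑ j ∈ range (d + 1), (m.choose j) • c (j + 1) := by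
      intro m
      rw [Finset.sum_range_succ' (fun j => ((m+1).choose j) • c j),
        Finset.sum_range_succ' (fun j => (m.choose j) • c j)]
      simp only [Nat.choose_succ_succ, add_smul, Nat.choose_zero_right]
      rw [Finset.sum_add_distrib]
      abel
    have h' : ∀ m, N ≤ m → m ≤ N + d →
        ∑ j ∈ range (d + 1), (m.choose j) • (fun j => c (j + 1)) j = 0 := by
      intro m hm hm'
      have k := key m
      rw [h m hm (by omega), h (m+1) (by omega) (by omega)] at k
      simpa using k.symm
    have hsucc := ih N (fun j => c (j + 1)) h'
    have hc0 : c 0 = 0 := by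
      have := h N le_rfl (by omega)
      rw [Finset.sum_range_succ' (fun j => (N.choose j) • c j)] at this
      have z : ∀ j ∈ range (d + 1), (N.choose (j+1)) • c (j + 1) = 0 := by
        intro j hj
        have := hsucc j (by simpa using Nat.lt_succ_iff.mp (Finset.mem_range.mp hj))
        rw [this, smul_zero]
      rw [Finset.sum_congr rfl z] at this
      simpa using this
    intro j hj
    match j with
    | 0 => exact hc0
    | j + 1 => exact hsucc j (by omega)

section
variable {R A : Type*} [CommRing R] [CommRing A] [Algebra R A]

/-- `L` applied to powers of `u` has the canonical form with "constant term" `a`. -/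
def GoodRep (u : A) (L : Module.End R A) (a : A) : Prop :=
  ∃ d : ℕ, ∃ b : ℕ → A, b 0 = a ∧ (∀ j, d < j → b j = 0) ∧
    ∀ m, d ≤ m → L (u ^ m) =
      ∑ j ∈ Finset.range (d + 1), (m.descFactorial j) • (u ^ (m - j) * b j)

variable {u : A}

lemma goodrep_sum_extend {b : ℕ → A} {d d' m : ℕ} (hd : d ≤ d')
    (hv : ∀ j, d < j → b j = 0) :
    ∑ j ∈ Finset.range (d' + 1), (m.descFactorial j) • (u ^ (m - j) * b j)
      = ∑ j ∈ Finset.range (d + 1), (m.descFactorial j) • (u ^ (m - j) * b j) := by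
  refine (Finset.sum_subset (by intro x hx; simp at hx ⊢; omega) ?_).symm
  intro j hj hj'
  rw [hv j (by simp at hj'; omega), mul_zero, smul_zero]

lemma GoodRep.zero : GoodRep (R := R) u 0 0 :=
  ⟨0, fun _ => 0, rfl, fun _ _ => rfl, fun m _ => by simp⟩

lemma GoodRep.one : GoodRep (R := R) u 1 1 := by
  refine ⟨0, fun j => if j = 0 then 1 else 0, rfl, fun j hj => by simp [hj.ne'], fun m _ => by simp⟩

lemma GoodRep.add {L₁ L₂ : Module.End R A} {a₁ a₂ : A}
    (h₁ : GoodRep u L₁ a₁) (h₂ : GoodRep u L₂ a₂) : GoodRep u (L₁ + L₂) (a₁ + a₂) := by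
  obtain ⟨d₁, b₁, e₁, v₁, r₁⟩ := h₁
  obtain ⟨d₂, b₂, e₂, v₂, r₂⟩ := h₂
  refine ⟨max d₁ d₂, fun j => b₁ j + b₂ j, by beta_reduce; rw [e₁, e₂], ?_, ?_⟩
  · intro j hj
    beta_reduce
    rw [v₁ j (lt_of_le_of_lt (le_max_left _ _) hj), v₂ j (lt_of_le_of_lt (le_max_right _ _) hj),
      add_zero]
  · intro m hm
    have E1 := goodrep_sum_extend (u := u) (le_max_left d₁ d₂) v₁ (m := m)
    have E2 := goodrep_sum_extend (u := u) (le_max_right d₁ d₂) v₂ (m := m)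
    rw [LinearMap.add_apply, r₁ m (le_trans (le_max_left _ _) hm),
      r₂ m (le_trans (le_max_right _ _) hm), ← E1, ← E2, ← Finset.sum_add_distrib]
    refine Finset.sum_congr rfl fun j _ => ?_
    rw [mul_add, smul_add]

lemma GoodRep.mulLeft (c : A) {L : Module.End R A} {a : A} (h : GoodRep u L a) :
    GoodRep u (LinearMap.mulLeft R c * L) (c * a) := by
  obtain ⟨d, b, e, v, r⟩ := h
  refine ⟨d, fun j => c * b j, by beta_reduce; rw [e], fun j hj => by beta_reduce; rw [v j hj, mul_zero], fun m hm => ?_⟩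
  rw [Module.End.mul_apply, LinearMap.mulLeft_apply, r m hm, Finset.mul_sum]
  refine Finset.sum_congr rfl fun j _ => ?_
  rw [mul_smul_comm]
  ring_nf

lemma GoodRep.deriv (δ : Derivation R A A) {L : Module.End R A} {a : A}
    (h : GoodRep u L a) : GoodRep u (δ.toLinearMap * L) (δ a) := by
  obtain ⟨d, b, e, v, r⟩ := h
  refine ⟨d + 1, fun j => match j with
    | 0 => δ (b 0)
    | (j + 1) => δ (b (j + 1)) + δ u * b j, by simp [e], ?_, ?_⟩
  · intro j hj
    match j with
    | (j + 1) =>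
      show δ (b (j + 1)) + δ u * b j = 0
      rw [v (j + 1) (by omega), v j (by omega), map_zero, mul_zero, add_zero]
  · intro m hm
    rw [Module.End.mul_apply]
    rw [show (δ.toLinearMap : A → A) = (δ : A → A) from rfl]
    rw [r m (by omega), map_sum]
    -- LHS expansion
    have lhs : ∀ j ∈ Finset.range (d + 1),
        δ ((m.descFactorial j) • (u ^ (m - j) * b j))
          = (m.descFactorial j) • (u ^ (m - j) * δ (b j))
            + (m.descFactorial (j+1)) • (u ^ (m - (j+1)) * (δ u * b j)) := by
      intro j hj
      have hjm : j ≤ m := by simp at hj; omega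
      rw [map_nsmul, Derivation.leibniz, Derivation.leibniz_pow, smul_add]
      rw [show m - j - 1 = m - (j + 1) from by omega]
      simp only [smul_eq_mul, nsmul_eq_mul, Nat.descFactorial_succ, Nat.cast_mul]
      ring
    rw [Finset.sum_congr rfl lhs, Finset.sum_add_distrib]
    -- RHS expansion
    rw [Finset.sum_range_succ' (fun j => (m.descFactorial j) •
      (u ^ (m - j) * (match j with | 0 => δ (b 0) | (j+1) => δ (b (j+1)) + δ u * b j)))]
    simp only [mul_add, smul_add, Nat.descFactorial_zero, Nat.sub_zero, one_smul]
    rw [Finset.sum_add_distrib]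
    have step1 : ∑ j ∈ Finset.range (d + 1), (m.descFactorial j) • (u ^ (m - j) * δ (b j))
        = (∑ j ∈ Finset.range (d + 1), (m.descFactorial (j+1)) • (u ^ (m - (j+1)) * δ (b (j+1))))
          + u ^ m * δ (b 0) := by
      rw [Finset.sum_range_succ' (fun j => (m.descFactorial j) • (u ^ (m - j) * δ (b j)))]
      rw [Finset.sum_range_succ (fun j => (m.descFactorial (j+1)) • (u ^ (m - (j+1)) * δ (b (j+1))))]
      rw [v (d + 1) (by omega), map_zero, mul_zero, smul_zero, add_zero]
      simp
    rw [step1]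
    abel
end

section
variable {R A : Type*} [CommRing R] [CommRing A] [Algebra R A] {u : A}

lemma GoodRep.pow (δ : Derivation R A A) (k : ℕ) {L : Module.End R A} {a : A}
    (h : GoodRep u L a) :
    GoodRep u ((δ.toLinearMap : Module.End R A) ^ k * L) (((δ.toLinearMap : Module.End R A) ^ k) a) := by
  induction k with
  | zero => simpa using h
  | succ k ih =>
    have h2 := ih.deriv δ
    rw [pow_succ', mul_assoc, Module.End.mul_apply]
    exact h2

lemma derpow_one_zero (δ : Derivation R A A) (k : ℕ) (hk : 0 < k) :
    ((δ.toLinearMap : Module.End R A) ^ k) (1 : A) = 0 := by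
  obtain ⟨k', rfl⟩ : ∃ k', k = k' + 1 := ⟨k - 1, by omega⟩
  rw [pow_succ, Module.End.mul_apply]
  rw [show (δ.toLinearMap : A → A) 1 = δ 1 from rfl, Derivation.map_one_eq_zero, map_zero]

lemma GoodRep.listProd {n : ℕ} (D : Fin n → Derivation R A A) (mdeg : Fin n → ℕ) :
    ∀ l : List (Fin n),
      GoodRep (R := R) u ((l.map fun i => ((D i).toLinearMap : Module.End R A) ^ mdeg i).prod)
        (if ∀ i ∈ l, mdeg i = 0 then 1 else 0) := by
  intro l
  induction l with
  | nil =>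
    simp only [List.map_nil, List.prod_nil, List.not_mem_nil, false_implies, implies_true,
      if_true]
    exact GoodRep.one
  | cons i t ih =>
    rw [List.map_cons, List.prod_cons]
    have h := ih.pow (D i) (mdeg i)
    have key : (((D i).toLinearMap : Module.End R A) ^ mdeg i)
        ((if ∀ j ∈ t, mdeg j = 0 then (1:A) else 0))
          = (if ∀ j ∈ i :: t, mdeg j = 0 then (1:A) else 0) := by
      by_cases ht : ∀ j ∈ t, mdeg j = 0
      · rw [if_pos ht]
        by_cases hi : mdeg i = 0
        · have : ∀ j ∈ i :: t, mdeg j = 0 := by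
            intro j hj; rcases List.mem_cons.mp hj with rfl | hj; exact hi; exact ht j hj
          rw [if_pos this, hi, pow_zero]; rfl
        · have : ¬ ∀ j ∈ i :: t, mdeg j = 0 := by
            intro hc; exact hi (hc i List.mem_cons_self)
          rw [if_neg this, derpow_one_zero (D i) (mdeg i) (by omega)]
      · rw [if_neg ht, map_zero]
        have : ¬ ∀ j ∈ i :: t, mdeg j = 0 := by
          intro hc; exact ht fun j hj => hc j (List.mem_cons_of_mem i hj)
        rw [if_neg this]
    rw [← key]
    exact h

lemma goodRep_mvDiffOp {n : ℕ} (D : Fin n → Derivation R A A) (P : MvPolynomial (Fin n) A)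
    (ha0 : P.coeff 0 ≠ 0) :
    GoodRep (R := R) u (mvDiffOp D P) (P.coeff 0) := by
  classical
  have hterm : ∀ m' : Fin n →₀ ℕ,
      GoodRep (R := R) u (LinearMap.mulLeft R (P.coeff m') *
        ((List.finRange n).map fun i => ((D i).toLinearMap : Module.End R A) ^ m' i).prod)
        (if m' = 0 then P.coeff 0 else 0) := by
    intro m'
    have h := (GoodRep.listProd (u := u) D (fun i => m' i) (List.finRange n)).mulLeft (P.coeff m')
    have : P.coeff m' * (if ∀ i ∈ List.finRange n, m' i = 0 then (1:A) else 0)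
        = (if m' = 0 then P.coeff 0 else 0) := by
      by_cases hm : m' = 0
      · subst hm
        rw [if_pos (by intro i _; simp), if_pos rfl, mul_one]
      · rw [if_neg ?_, if_neg hm, mul_zero]
        intro hc
        exact hm (Finsupp.ext fun i => hc i (List.mem_finRange i))
    rwa [this] at h
  have hsum : ∀ s : Finset (Fin n →₀ ℕ),
      GoodRep (R := R) u (∑ m' ∈ s, LinearMap.mulLeft R (P.coeff m') *
        ((List.finRange n).map fun i => ((D i).toLinearMap : Module.End R A) ^ m' i).prod)
        (∑ m' ∈ s, if m' = 0 then P.coeff 0 else 0) := by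
    intro s
    induction s using Finset.induction_on with
    | empty => simpa using GoodRep.zero (R := R) (u := u)
    | insert _ _ hx ih =>
      rw [Finset.sum_insert hx, Finset.sum_insert hx]
      exact (hterm _).add ih
  have h := hsum P.support
  have : (∑ m' ∈ P.support, if m' = 0 then P.coeff 0 else 0) = P.coeff 0 := by
    rw [Finset.sum_ite_eq' P.support 0 (fun _ => P.coeff 0)]
    rw [if_pos (MvPolynomial.mem_support_iff.mpr ha0)]
  rw [this] at h
  exact h

end

/-- Let `A` be a commutative unital `R`-algebra, `D = (D₁,…,Dₙ)` `R`-derivations of `A`,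
and `P(ξ)` a polynomial over `A` whose constant term `a₀ = P(0)` is neither zero nor a
zero-divisor. Then the radical of `Ker P(D)` equals the nilradical of `A`. -/
theorem stmt5 {R A : Type*} [CommRing R] [CommRing A] [Algebra R A]
    (n : ℕ) (D : Fin n → Derivation R A A)
    (P : MvPolynomial (Fin n) A)
    (ha0 : P.coeff 0 ≠ 0) (hreg : ∀ b : A, P.coeff 0 * b = 0 → b = 0) :
    {u : A | ∃ N : ℕ, ∀ m ≥ N, mvDiffOp D P (u ^ m) = 0} =
      {u : A | IsNilpotent u} := by
  ext u
  simp only [Set.mem_setOf_eq]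
  constructor
  · rintro ⟨N, hN⟩
    obtain ⟨d, b, hb0, hbv, hrep⟩ := goodRep_mvDiffOp (u := u) D P ha0
    set M := max N d with hM
    set c : ℕ → A := fun j => (j.factorial) • (u ^ (M + d - j) * b j) with hc
    have hP : ∀ m, M ≤ m → m ≤ M + d →
        ∑ j ∈ Finset.range (d + 1), (m.choose j) • c j = 0 := by
      intro m hm hm'
      have h1 := hrep m (le_trans (le_max_right N d) hm)
      have h2 := hN m (le_trans (le_max_left N d) hm)
      rw [h2] at h1
      have h3 : u ^ (M + d - m) *
          (∑ j ∈ Finset.range (d + 1), (m.descFactorial j) • (u ^ (m - j) * b j)) = 0 := by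
        rw [← h1, mul_zero]
      rw [Finset.mul_sum] at h3
      rw [← h3]
      refine Finset.sum_congr rfl fun j hj => ?_
      have hjd : j ≤ d := by simp at hj; omega
      have hjm : j ≤ m := le_trans hjd (le_trans (le_max_right N d) hm)
      rw [hc]
      beta_reduce
      rw [mul_smul_comm, ← mul_assoc, ← pow_add, smul_smul,
        show M + d - m + (m - j) = M + d - j from by omega,
        show m.choose j * j.factorial = m.descFactorial j from by
          rw [mul_comm, ← Nat.descFactorial_eq_factorial_mul_choose]]
    have hc0 := pascal_aux d M c hP 0 (Nat.zero_le d)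
    have hc0' : u ^ (M + d) * P.coeff 0 = 0 := by
      rw [hc] at hc0
      simpa [hb0] using hc0
    exact ⟨M + d, hreg _ (by rw [mul_comm] at hc0'; exact hc0')⟩
  · rintro ⟨K, hK⟩
    refine ⟨K, fun m hm => ?_⟩
    rw [show m = K + (m - K) from by omega, pow_add, hK, zero_mul, map_zero]
end
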